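/- Let μ > 0, a₀ > 0, a(t) = a₀ − μ t, and let x solve x'(t) = a(t) − x(t)² with x(0) = √a₀. Then x exists on all of [0, a₀/μ], is nonincreasing there, and satisfies √(a(t)) ≤ x(t) ≤ √a₀ for 0 ≤ t ≤ a₀/μ, with strict inequality x(t) > √(a(t)) for 0 < t < a₀/μ. In particular x(a₀/μ) ≥ 0: the trajectory remains nonnegative at least until the slowly varying parameter a reaches the static saddle-node bifurcation value a = 0, so tipping is delayed to a ≤ 0. -/

import Mathlib

open Real Filter Topology

/-- For `μ > 0`, `a₀ > 0` and `a t = a₀ - μ t`, the solution of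
`x' = a t - x²` with `x 0 = √a₀` exists on all of `[0, a₀/μ]`, is nonincreasing there, and
satisfies `√(a t) ≤ x t ≤ √a₀` on `[0, a₀/μ]`, with strict inequality `√(a t) < x t` on
`(0, a₀/μ)`; in particular `x (a₀/μ) ≥ 0`, so that the trajectory stays nonnegative at least
until `a` reaches the static bifurcation value `a = 0` (tipping is delayed to `a ≤ 0`). -/
theorem drifting_tipping_is_delayed
    (μ a₀ : ℝ) (hμ : 0 < μ) (ha₀ : 0 < a₀)
    (a : ℝ → ℝ) (ha : a = fun t => a₀ - μ * t) :
    ∃ x : ℝ → ℝ,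
      x 0 = Real.sqrt a₀ ∧
      (∀ t ∈ Set.Icc (0 : ℝ) (a₀ / μ), HasDerivAt x (a t - (x t) ^ 2) t) ∧
      AntitoneOn x (Set.Icc 0 (a₀ / μ)) ∧
      (∀ t ∈ Set.Icc (0 : ℝ) (a₀ / μ), Real.sqrt (a t) ≤ x t ∧ x t ≤ Real.sqrt a₀) ∧
      (∀ t ∈ Set.Ioo (0 : ℝ) (a₀ / μ), Real.sqrt (a t) < x t) ∧
      0 ≤ x (a₀ / μ) := by
  subst ha
  set T : ℝ := a₀ / μ with hTdef
  have hT0 : 0 < T := div_pos ha₀ hμ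
  have hμT : μ * T = a₀ := by rw [hTdef]; field_simp
  have hs0 : (0:ℝ) ≤ Real.sqrt a₀ := Real.sqrt_nonneg _
  set M : ℝ := Real.sqrt a₀ + 1 with hMdef
  have hM1 : (1:ℝ) ≤ M := by rw [hMdef]; linarith
  -- clamped vector field
  set clamp : ℝ → ℝ := fun y => max (-1) (min y M) with hclampdef
  have hclamp_lb : ∀ y, -1 ≤ clamp y := fun y => le_max_left _ _
  have hclamp_ub : ∀ y, clamp y ≤ M := fun y =>
    max_le (by linarith) (min_le_right _ _)
  have hclamp_abs : ∀ y, |clamp y| ≤ M := by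
    intro y
    rw [abs_le]
    exact ⟨by linarith [hclamp_lb y], hclamp_ub y⟩
  have hclamp_id : ∀ y, -1 ≤ y → y ≤ M → clamp y = y := by
    intro y h1 h2
    simp [hclampdef, min_eq_left h2, max_eq_right h1]
  have hclamp_lip : ∀ y z : ℝ, |clamp y - clamp z| ≤ |y - z| := by
    intro y z
    have h1 : |clamp y - clamp z| ≤ |min y M - min z M| := by
      simpa [hclampdef, max_comm] using
        abs_max_sub_max_le_abs (min y M) (min z M) (-1)
    refine h1.trans ?_
    simpa using abs_min_sub_min_le_max y M z M
  set v : ℝ → ℝ → ℝ := fun t y => a₀ - μ * t - (clamp y) ^ 2 with hvdef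
  set C : ℝ := a₀ + μ * (T + 1) + M ^ 2 with hCdef
  have hC0 : 0 < C := by positivity
  set R : ℝ := C * (T + 1) with hRdef
  have hR0 : 0 ≤ R := by positivity
  -- Picard–Lindelöf on [-1, T+1]
  have hpl : IsPicardLindelof v (tmin := -1) (tmax := T + 1)
      ⟨0, by constructor <;> linarith⟩ (Real.sqrt a₀) (⟨R, hR0⟩ : NNReal) 0 (⟨C, hC0.le⟩ : NNReal)
      (⟨2 * M, by positivity⟩ : NNReal) := by
    constructor
    · intro t _
      refine LipschitzOnWith.of_dist_le_mul ?_
      intro y _ z _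
      have hd : dist (v t y) (v t z) = |clamp z ^ 2 - clamp y ^ 2| := by
        rw [Real.dist_eq]
        show |(a₀ - μ * t - clamp y ^ 2) - (a₀ - μ * t - clamp z ^ 2)| = _
        congr 1; ring
      rw [hd, Real.dist_eq]
      have : |clamp z ^ 2 - clamp y ^ 2| = |clamp z - clamp y| * |clamp z + clamp y| := by
        rw [← abs_mul]; ring_nf
      rw [this]
      have h1 : |clamp z - clamp y| ≤ |y - z| := by
        rw [abs_sub_comm]; exact hclamp_lip y z
      have h2 : |clamp z + clamp y| ≤ 2 * M :=
        (abs_add_le _ _).trans (by linarith [hclamp_abs y, hclamp_abs z])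
      calc |clamp z - clamp y| * |clamp z + clamp y|
          ≤ |y - z| * (2 * M) := by
            exact mul_le_mul h1 h2 (abs_nonneg _) (abs_nonneg _)
        _ = (⟨2 * M, by positivity⟩ : NNReal) * |y - z| := by
            simp [NNReal.coe_mk]; ring
    · intro y _
      exact (Continuous.sub (continuous_const.sub (continuous_const.mul continuous_id))
        continuous_const).continuousOn
    · intro t ht y _
      have h1 : |a₀ - μ * t| ≤ a₀ + μ * (T + 1) := by
        rw [abs_le]
        constructor <;> nlinarith [ht.1, ht.2]
      have h2 : (clamp y) ^ 2 ≤ M ^ 2 := by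
        nlinarith [hclamp_abs y, abs_nonneg (clamp y), sq_abs (clamp y),
          neg_abs_le (clamp y), le_abs_self (clamp y)]
      have := abs_sub (a₀ - μ * t) ((clamp y) ^ 2)
      calc ‖v t y‖ = |a₀ - μ * t - (clamp y)^2| := rfl
        _ ≤ |a₀ - μ * t| + |(clamp y)^2| := abs_sub _ _
        _ ≤ (a₀ + μ * (T + 1)) + M ^ 2 := by
            refine add_le_add h1 ?_
            rw [abs_of_nonneg (sq_nonneg _)]; exact h2
        _ = C := by rw [hCdef]
    · show C * max (T + 1 - 0) (0 - -1) ≤ R - 0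
      have : max (T + 1 - 0) (0 - -1) = T + 1 := by
        rw [max_eq_left] <;> linarith
      rw [this, sub_zero]
  obtain ⟨x, hx0, hxD⟩ := hpl.exists_eq_forall_mem_Icc_hasDerivWithinAt₀
  have hx0 : x 0 = Real.sqrt a₀ := hx0
  -- upgrade to HasDerivAt on [0, T]
  have hderiv : ∀ t ∈ Set.Icc (0:ℝ) T, HasDerivAt x (v t (x t)) t := by
    intro t ht
    refine (hxD t ⟨by linarith [ht.1], by linarith [ht.2]⟩).hasDerivAt ?_
    exact Icc_mem_nhds (by linarith [ht.1]) (by linarith [ht.2])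
  have hcont : ContinuousOn x (Set.Icc 0 T) := fun t ht =>
    ((hderiv t ht).continuousAt).continuousWithinAt
  -- lower barrier
  set Lb : ℝ → ℝ := fun t => Real.sqrt (a₀ - μ * t) with hLbdef
  have haT : ∀ t ∈ Set.Icc (0:ℝ) T, 0 ≤ a₀ - μ * t := by
    intro t ht
    have := mul_le_mul_of_nonneg_left ht.2 hμ.le
    linarith [hμT]
  have haTpos : ∀ t ∈ Set.Ico (0:ℝ) T, 0 < a₀ - μ * t := by
    intro t ht
    have := mul_lt_mul_of_pos_left ht.2 hμ
    linarith [hμT]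
  have hLbcont : ContinuousOn Lb (Set.Icc 0 T) := by
    rw [hLbdef]
    exact (Real.continuous_sqrt.comp
      (continuous_const.sub (continuous_const.mul continuous_id))).continuousOn
  have hLbderiv : ∀ t, 0 < a₀ - μ * t →
      HasDerivAt Lb (1 / (2 * Real.sqrt (a₀ - μ * t)) * (-μ)) t := by
    intro t htpos
    have hin : HasDerivAt (fun s : ℝ => a₀ - μ * s) (-μ) t := by
      simpa using ((hasDerivAt_id t).const_mul μ).const_sub a₀
    exact (Real.hasDerivAt_sqrt (ne_of_gt htpos)).comp t hin
  have hLb_le : ∀ t ∈ Set.Icc (0:ℝ) T, Lb t ≤ Real.sqrt a₀ := by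
    intro t ht
    exact Real.sqrt_le_sqrt (by nlinarith [ht.1])
  have hLb_nonneg : ∀ t, 0 ≤ Lb t := fun t => Real.sqrt_nonneg _
  -- lower bound: Lb ≤ x on [0, T]
  have hlow : ∀ t ∈ Set.Icc (0:ℝ) T, Lb t ≤ x t := by
    refine image_le_of_deriv_right_lt_deriv_boundary'
      (f' := fun t => 1 / (2 * Real.sqrt (a₀ - μ * t)) * (-μ))
      (B' := fun t => v t (x t)) hLbcont ?_ ?_ hcont ?_ ?_
    · intro t ht
      exact (hLbderiv t (haTpos t ht)).hasDerivWithinAt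
    · have : Lb 0 = Real.sqrt a₀ := by simp [hLbdef]
      rw [this, hx0]
    · intro t ht
      exact (hderiv t ⟨ht.1, le_of_lt ht.2⟩).hasDerivWithinAt
    · intro t ht heq
      have hp := haTpos t ht
      have hcl : clamp (x t) = x t := by
        rw [← heq]
        exact hclamp_id _ (by linarith [hLb_nonneg t])
          (by linarith [hLb_le t ⟨ht.1, le_of_lt ht.2⟩])
      have hv0 : v t (x t) = 0 := by
        have hxt : (x t) ^ 2 = a₀ - μ * t := by
          rw [← heq, hLbdef]
          exact Real.sq_sqrt hp.le
        show a₀ - μ * t - clamp (x t) ^ 2 = 0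
        rw [hcl, hxt]
        ring
      show 1 / (2 * Real.sqrt (a₀ - μ * t)) * (-μ) < v t (x t)
      rw [hv0]
      have hsp : 0 < Real.sqrt (a₀ - μ * t) := Real.sqrt_pos.2 hp
      have : 0 < 1 / (2 * Real.sqrt (a₀ - μ * t)) := by positivity
      nlinarith
  -- the vector field is nonpositive along the solution on [0, T]
  have hvle : ∀ t ∈ Set.Icc (0:ℝ) T, v t (x t) ≤ 0 := by
    intro t ht
    have h1 : Lb t ≤ clamp (x t) := by
      have : min (x t) M = x t ∨ min (x t) M = M := min_choice _ _
      rcases le_total (x t) M with h | h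
      · rw [hclampdef]
        simp only []
        rw [min_eq_left h, max_eq_right (by linarith [hLb_nonneg t, hlow t ht])]
        exact hlow t ht
      · rw [hclampdef]
        simp only []
        rw [min_eq_right h, max_eq_right (by linarith)]
        linarith [hLb_le t ht]
    have h2 : a₀ - μ * t ≤ (clamp (x t)) ^ 2 := by
      have := Real.sq_sqrt (haT t ht)
      nlinarith [hLb_nonneg t]
    rw [hvdef]; simp only []; linarith
  -- upper bound
  have hup : ∀ t ∈ Set.Icc (0:ℝ) T, x t ≤ Real.sqrt a₀ := by
    refine image_le_of_deriv_right_le_deriv_boundary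
      (f' := fun t => v t (x t)) (B := fun _ => Real.sqrt a₀) (B' := fun _ => 0)
      hcont ?_ (le_of_eq hx0) continuousOn_const ?_ ?_
    · intro t ht
      exact (hderiv t ⟨ht.1, le_of_lt ht.2⟩).hasDerivWithinAt
    · intro t _
      exact (hasDerivAt_const t _).hasDerivWithinAt
    · intro t ht
      exact hvle t ⟨ht.1, le_of_lt ht.2⟩
  have hcl : ∀ t ∈ Set.Icc (0:ℝ) T, clamp (x t) = x t := by
    intro t ht
    exact hclamp_id _ (by linarith [hLb_nonneg t, hlow t ht])
      (by linarith [hup t ht])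
  have hderiv' : ∀ t ∈ Set.Icc (0:ℝ) T, HasDerivAt x ((a₀ - μ * t) - (x t) ^ 2) t := by
    intro t ht
    have := hderiv t ht
    rwa [hvdef, show (fun t y => a₀ - μ * t - clamp y ^ 2) t (x t)
        = a₀ - μ * t - clamp (x t) ^ 2 from rfl, hcl t ht] at this
  refine ⟨x, hx0, ?_, ?_, ?_, ?_, ?_⟩
  · intro t ht
    exact hderiv' t ht
  · refine antitoneOn_of_deriv_nonpos (convex_Icc 0 T) hcont ?_ ?_
    · intro t ht
      rw [interior_Icc] at ht
      exact (hderiv t ⟨le_of_lt ht.1, le_of_lt ht.2⟩).differentiableAt.differentiableWithinAt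
    · intro t ht
      rw [interior_Icc] at ht
      have ht' : t ∈ Set.Icc (0:ℝ) T := ⟨le_of_lt ht.1, le_of_lt ht.2⟩
      rw [(hderiv t ht').deriv]
      exact hvle t ht'
  · intro t ht
    exact ⟨hlow t ht, hup t ht⟩
  · intro t ht
    have ht' : t ∈ Set.Icc (0:ℝ) T := ⟨le_of_lt ht.1, le_of_lt ht.2⟩
    rcases lt_or_eq_of_le (hlow t ht') with h | h
    · exact h
    exfalso
    -- equality at an interior point: x - Lb has a local minimum there
    have hp : 0 < a₀ - μ * t := haTpos t ⟨le_of_lt ht.1, ht.2⟩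
    have hgderiv : HasDerivAt (fun s => x s - Lb s)
        (v t (x t) - 1 / (2 * Real.sqrt (a₀ - μ * t)) * (-μ)) t :=
      (hderiv t ht').sub (hLbderiv t hp)
    have hmin : IsLocalMin (fun s => x s - Lb s) t := by
      filter_upwards [Ioo_mem_nhds ht.1 ht.2] with s hs
      have hs' : s ∈ Set.Icc (0:ℝ) T := ⟨le_of_lt hs.1, le_of_lt hs.2⟩
      simp only [← h, sub_self]
      linarith [hlow s hs']
    have hzero := hmin.hasDerivAt_eq_zero hgderiv
    have hv0 : v t (x t) = 0 := by
      have hxt : (x t) ^ 2 = a₀ - μ * t := by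
        rw [← h, hLbdef]
        exact Real.sq_sqrt hp.le
      show a₀ - μ * t - clamp (x t) ^ 2 = 0
      rw [hcl t ht', hxt]
      ring
    have hsp : 0 < Real.sqrt (a₀ - μ * t) := Real.sqrt_pos.2 hp
    rw [hv0] at hzero
    have h1 : 0 < 1 / (2 * Real.sqrt (a₀ - μ * t)) := by positivity
    nlinarith
  · have := hlow T ⟨le_of_lt hT0, le_refl T⟩
    have hLbT : Lb T = 0 := by
      rw [hLbdef]
      simp only []
      rw [show a₀ - μ * T = 0 by linarith, Real.sqrt_zero]
    linarith
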